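/- arXiv:1009.5277 — 2 statements merged into one kernel-verified Lean document; each statement's English description precedes it below -/
import Mathlib

section
/- Frechet differentiability of the system operator implies Frechet differentiability of the natural state: if F : U → Y has Frechet derivative L(u,·) at the point u^t ⊣ R_t v_{0,∞} for all relevant v, then the natural state map ξ_t^u : U_{0,∞} → Y_{0,∞} is Frechet differentiable at v_{0,∞} = L_t u_{t,∞}, with derivative w_{0,∞} ↦ (L_t L(u^t ⊣ R_t v_{0,∞}, 0^t ⊣ R_t w_{0,∞}))_{0,∞}, and the operator norm of this derivative is at most ‖L(u^t⊣R_t v_{0,∞}, ·)‖. -/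
/-- Proposition 22: Frechet differentiability of the natural state is inherited from the
system. Here `x₀ = u^t ⊣ R_t v₀`; the splice of the fixed past with a future increment is
the linear isometry `J` (`w ↦ 0^t ⊣ R_t w`); `T` is the norm-nonincreasing linear
truncation-and-shift `y ↦ (L_t y)_{0,∞}`; and the natural state is
`ξ v = T (F (x₀ + J (v − v₀)))`. If `F` has Frechet derivative `L` at `x₀`, then `ξ` has
Frechet derivative `T ∘ L ∘ J` at `v₀`, whose operator norm is at most `‖L‖`. -/
theorem natural_state_frechet {U Y Ufut Yfut : Type*}
    [NormedAddCommGroup U] [NormedSpace ℝ U]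
    [NormedAddCommGroup Y] [NormedSpace ℝ Y]
    [NormedAddCommGroup Ufut] [NormedSpace ℝ Ufut]
    [NormedAddCommGroup Yfut] [NormedSpace ℝ Yfut]
    (F : U → Y) (x₀ : U) (L : U →L[ℝ] Y) (hF : HasFDerivAt F L x₀)
    (J : Ufut →ₗᵢ[ℝ] U) (T : Y →L[ℝ] Yfut) (hT : ∀ y, ‖T y‖ ≤ ‖y‖)
    (v₀ : Ufut) (ξ : Ufut → Yfut)
    (hξ : ∀ v, ξ v = T (F (x₀ + J (v - v₀)))) :
    HasFDerivAt ξ (T.comp (L.comp J.toContinuousLinearMap)) v₀ ∧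
      ‖T.comp (L.comp J.toContinuousLinearMap)‖ ≤ ‖L‖ := by
  constructor
  · -- g v = x₀ + J (v - v₀) has derivative J at v₀
    have hg : HasFDerivAt (fun v : Ufut => x₀ + J (v - v₀))
        (J.toContinuousLinearMap) v₀ := by
      have h1 : HasFDerivAt (fun v : Ufut => (x₀ - J v₀) + J v)
          (J.toContinuousLinearMap) v₀ :=
        (J.toContinuousLinearMap.hasFDerivAt).const_add (x₀ - J v₀)
      have heq : (fun v : Ufut => x₀ + J (v - v₀))
          = fun v : Ufut => (x₀ - J v₀) + J v := by
        funext v; simp [map_sub]; abel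
      rw [heq]; exact h1
    have hg0 : x₀ + J (v₀ - v₀) = x₀ := by simp
    have hFg : HasFDerivAt (fun v : Ufut => F (x₀ + J (v - v₀)))
        (L.comp J.toContinuousLinearMap) v₀ := by
      have := (hg0 ▸ hF).comp v₀ hg
      exact this
    have : HasFDerivAt (fun v : Ufut => T (F (x₀ + J (v - v₀))))
        (T.comp (L.comp J.toContinuousLinearMap)) v₀ :=
      (T.hasFDerivAt.comp v₀ hFg)
    convert this using 1
    funext v
    exact hξ v
  · apply ContinuousLinearMap.opNorm_le_bound _ (norm_nonneg L)
    intro w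
    calc ‖(T.comp (L.comp J.toContinuousLinearMap)) w‖
        ≤ ‖L (J w)‖ := hT _
      _ ≤ ‖L‖ * ‖J w‖ := L.le_opNorm _
      _ = ‖L‖ * ‖w‖ := by rw [J.norm_map]
end

section
/- Uniqueness of symmetric kernels from the induced polynomial functional (degree N, continuous kernels): if h : [0,∞)^N → ℝ is continuous, absolutely integrable, symmetric, and ∫₀^σ⋯∫₀^σ h(τ₁,…,τ_N) v(σ−τ₁)⋯v(σ−τ_N) dτ₁⋯dτ_N = 0 for all bounded piecewise continuous v and all σ > 0, then h ≡ 0. -/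
open Finset

lemma mySupersetSum {N : ℕ} (T : Finset (Fin N)) :
    ∑ S ∈ Finset.univ.filter (fun S : Finset (Fin N) => T ⊆ S), (-1:ℝ) ^ (N - S.card)
      = if T = Finset.univ then 1 else 0 := by
  classical
  have key : ∑ S ∈ Finset.univ.filter (fun S : Finset (Fin N) => T ⊆ S), (-1:ℝ) ^ (N - S.card)
      = ∑ R ∈ Tᶜ.powerset, (-1:ℝ) ^ (N - T.card - R.card) := by
    refine Finset.sum_nbij' (fun S => S \ T) (fun R => R ∪ T) ?_ ?_ ?_ ?_ ?_
    · intro S hS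
      simp only [mem_filter, mem_univ, true_and] at hS
      simp only [mem_powerset]
      intro x hx
      simp only [mem_sdiff] at hx
      simp [mem_compl, hx.2]
    · intro R hR
      simp only [mem_filter, mem_univ, true_and]
      exact subset_union_right
    · intro S hS
      simp only [mem_filter, mem_univ, true_and] at hS
      exact sdiff_union_of_subset hS
    · intro R hR
      simp only [mem_powerset] at hR
      show (R ∪ T) \ T = R
      have hd : Disjoint R T := by
        rw [disjoint_iff_inter_eq_empty, eq_empty_iff_forall_notMem]
        intro x hx
        simp only [mem_inter] at hx
        have := hR hx.1
        simp only [mem_compl] at this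
        exact this hx.2
      rw [union_sdiff_distrib, sdiff_self]; simp [sdiff_eq_self_of_disjoint hd]
    · intro S hS
      simp only [mem_filter, mem_univ, true_and] at hS
      show (-1:ℝ) ^ (N - S.card) = (-1:ℝ) ^ (N - T.card - (S \ T).card)
      congr 1
      have h1 : (S \ T).card = S.card - T.card := card_sdiff_of_subset hS
      have h2 : T.card ≤ S.card := card_le_card hS
      have h3 : S.card ≤ N := by simpa using card_le_card (subset_univ S)
      omega
  rw [key]
  have hm : Tᶜ.card = N - T.card := by rw [card_compl]; simp
  have expand : ∀ R ∈ Tᶜ.powerset, (-1:ℝ) ^ (N - T.card - R.card)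
      = (-1:ℝ) ^ (N - T.card) * (-1:ℝ) ^ R.card := by
    intro R hR
    have hRc : R.card ≤ N - T.card := by
      rw [← hm]; exact card_le_card (mem_powerset.mp hR)
    have he : (N - T.card - R.card) + 2 * R.card = (N - T.card) + R.card := by omega
    calc (-1:ℝ) ^ (N - T.card - R.card)
        = (-1:ℝ) ^ (N - T.card - R.card) * ((-1:ℝ)^2) ^ R.card := by norm_num
      _ = (-1:ℝ) ^ ((N - T.card - R.card) + 2 * R.card) := by rw [← pow_mul, ← pow_add]
      _ = (-1:ℝ) ^ ((N - T.card) + R.card) := by rw [he]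
      _ = _ := by rw [pow_add]
  rw [Finset.sum_congr rfl expand, ← Finset.mul_sum]
  have cast : ∑ R ∈ Tᶜ.powerset, (-1:ℝ) ^ R.card
      = ((∑ R ∈ Tᶜ.powerset, (-1:ℤ) ^ R.card : ℤ) : ℝ) := by push_cast; rfl
  rw [cast, Finset.sum_powerset_neg_one_pow_card]
  by_cases hT : T = Finset.univ
  · have : Tᶜ = (∅ : Finset (Fin N)) := by simp [hT]
    rw [this]
    simp [hT, ← hm, this]
  · have : Tᶜ ≠ (∅ : Finset (Fin N)) := by
      intro hc
      exact hT (by simpa [compl_eq_empty_iff] using hc)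
    simp [hT, this]

lemma myPolar {N : ℕ} (a : Fin N → Fin N → ℝ) :
    ∑ S : Finset (Fin N), (-1:ℝ) ^ (N - S.card) * ∏ i, (∑ j ∈ S, a i j)
    = ∑ f ∈ Finset.univ.filter (fun f : Fin N → Fin N => Function.Bijective f),
        ∏ i, a i (f i) := by
  classical
  have step1 : ∀ S : Finset (Fin N),
      (-1:ℝ) ^ (N - S.card) * ∏ i, (∑ j ∈ S, a i j)
      = ∑ f : Fin N → Fin N,
          (if Finset.image f Finset.univ ⊆ S then (-1:ℝ) ^ (N - S.card) * ∏ i, a i (f i)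
           else 0) := by
    intro S
    rw [Finset.prod_univ_sum, Finset.mul_sum]
    have hpi : Fintype.piFinset (fun _ : Fin N => S)
        = Finset.univ.filter
            (fun f : Fin N → Fin N => Finset.image f Finset.univ ⊆ S) := by
      ext f
      simp [Fintype.mem_piFinset, Finset.image_subset_iff]
    rw [hpi, Finset.sum_filter]
  rw [Finset.sum_congr rfl (fun S _ => step1 S), Finset.sum_comm]
  have step2 : ∀ f : Fin N → Fin N,
      (∑ S : Finset (Fin N),
        if Finset.image f Finset.univ ⊆ S then (-1:ℝ) ^ (N - S.card) * ∏ i, a i (f i)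
        else 0)
      = (if Function.Bijective f then 1 else 0) * ∏ i, a i (f i) := by
    intro f
    rw [← Finset.sum_filter, ← Finset.sum_mul, mySupersetSum]
    congr 1
    have himg : Finset.image f Finset.univ = Finset.univ ↔ Function.Bijective f := by
      constructor
      · intro he
        have hsurj : Function.Surjective f := by
          intro y
          have : y ∈ Finset.image f Finset.univ := by rw [he]; exact Finset.mem_univ y
          obtain ⟨x, _, hx⟩ := Finset.mem_image.mp this
          exact ⟨x, hx⟩
        exact Finite.surjective_iff_bijective.mp hsurj
      · intro hb
        apply Finset.eq_univ_of_forall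
        intro y
        obtain ⟨x, hx⟩ := hb.2 y
        exact Finset.mem_image.mpr ⟨x, Finset.mem_univ x, hx⟩
    simp [himg]
  rw [Finset.sum_congr rfl (fun f _ => step2 f)]
  simp_rw [ite_mul, one_mul, zero_mul]
  rw [← Finset.sum_filter]
open MeasureTheory Set

lemma indicatorContAt {a b x : ℝ} (h1 : x ≠ a) (h2 : x ≠ b) :
    ContinuousAt ((Set.Icc a b).indicator (fun _ => (1:ℝ))) x := by
  by_cases hx : x ∈ Set.Icc a b
  · have hx' : x ∈ Set.Ioo a b := ⟨lt_of_le_of_ne hx.1 (Ne.symm h1), lt_of_le_of_ne hx.2 h2⟩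
    apply Filter.EventuallyEq.continuousAt (y := (1:ℝ))
    filter_upwards [Ioo_mem_nhds hx'.1 hx'.2] with y hy
    exact Set.indicator_of_mem (Set.Ioo_subset_Icc_self hy) _
  · apply ContinuousAt.congr (continuousAt_const : ContinuousAt (fun _ => (0:ℝ)) x)
    have : (Set.Icc a b)ᶜ ∈ nhds x := (isClosed_Icc.isOpen_compl).mem_nhds hx
    filter_upwards [this] with y hy
    exact (Set.indicator_of_notMem hy _).symm

lemma rectZero {N : ℕ} (h : (Fin N → ℝ) → ℝ) (hcont : Continuous h)
    (H : ∀ (c : Fin N → ℝ) (δ : ℝ), (∀ i, 0 ≤ c i) → 0 < δ →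
      ∫ x in Set.univ.pi (fun i => Set.Icc (c i) (c i + δ)), h x = 0)
    (x₀ : Fin N → ℝ) (hx₀ : ∀ i, 0 ≤ x₀ i) : h x₀ ≤ 0 := by
  by_contra hpos
  push_neg at hpos
  obtain ⟨δ', hδ', hball⟩ :=
    Metric.continuousAt_iff.mp hcont.continuousAt (h x₀ / 2) (by linarith)
  set δ := δ' / 2 with hδdef
  have hδpos : 0 < δ := by positivity
  set R := Set.univ.pi (fun i => Set.Icc (x₀ i) (x₀ i + δ)) with hRdef
  have hlb : ∀ y ∈ R, h x₀ / 2 ≤ h y := by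
    intro y hy
    have hdist : dist y x₀ ≤ δ := by
      rw [dist_pi_le_iff (le_of_lt hδpos)]
      intro i
      have := hy i (mem_univ i)
      rw [Real.dist_eq, abs_le]
      constructor <;> [linarith [this.1]; linarith [this.2]]
    have := hball (show dist y x₀ < δ' by linarith)
    rw [Real.dist_eq, abs_lt] at this
    linarith [this.1]
  have hcomp : IsCompact R := isCompact_univ_pi (fun i => isCompact_Icc)
  have hmeas : MeasurableSet R := MeasurableSet.univ_pi (fun i => measurableSet_Icc)
  have hinth : IntegrableOn h R := hcont.continuousOn.integrableOn_compact hcomp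
  have hintc : IntegrableOn (fun _ => h x₀ / 2) R :=
    integrableOn_const hcomp.measure_lt_top.ne
  have hmono := setIntegral_mono_on hintc hinth hmeas hlb
  rw [setIntegral_const, H x₀ δ hx₀ hδpos] at hmono
  have hvol : (volume R).toReal = δ ^ N := by
    rw [hRdef, volume_pi_pi]
    simp only [Real.volume_Icc, add_sub_cancel_left]
    rw [Finset.prod_const, Finset.card_univ, Fintype.card_fin,
      ENNReal.toReal_pow, ENNReal.toReal_ofReal (le_of_lt hδpos)]
  rw [measureReal_def, hvol, smul_eq_mul] at hmono
  have : 0 < δ ^ N * (h x₀ / 2) := by positivity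
  linarith

open MeasureTheory Set

/-- Uniqueness of continuous symmetric kernels from the induced degree-`N` polynomial
functional (key step of Proposition 20, scalar homogeneous case): if `h` is continuous,
absolutely integrable on `[0,∞)^N`, symmetric, and
`∫_{[0,σ]^N} h(τ) v(σ−τ₁)⋯v(σ−τ_N) dτ = 0` for every bounded piecewise continuous `v`
and every `σ > 0`, then `h` vanishes on `[0,∞)^N`. -/
theorem symmetric_kernel_unique (N : ℕ) (hN : 0 < N)
    (h : (Fin N → ℝ) → ℝ) (hcont : Continuous h)
    (hint : IntegrableOn h {x : Fin N → ℝ | ∀ i, 0 ≤ x i})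
    (hsym : ∀ (π : Equiv.Perm (Fin N)) (x : Fin N → ℝ), h (x ∘ π) = h x)
    (hvanish : ∀ v : ℝ → ℝ,
      (∃ C, ∀ x, |v x| ≤ C) →
      (∀ a b : ℝ, {x ∈ Icc a b | ¬ ContinuousAt v x}.Finite) →
      ∀ σ : ℝ, 0 < σ →
        (∫ x in Set.univ.pi fun _ : Fin N => Icc (0:ℝ) σ,
          h x * ∏ i : Fin N, v (σ - x i)) = 0) :
    ∀ x : Fin N → ℝ, (∀ i, 0 ≤ x i) → h x = 0 := by
  classical
  have rect : ∀ (c : Fin N → ℝ) (δ : ℝ), (∀ i, 0 ≤ c i) → 0 < δ →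
      ∫ x in Set.univ.pi (fun i => Icc (c i) (c i + δ)), h x = 0 := by
    intro c δ hc hδ
    set σ : ℝ := δ + 1 + ∑ i, c i with hσdef
    have hsum : 0 ≤ ∑ i, c i := Finset.sum_nonneg (fun i _ => hc i)
    have hσpos : 0 < σ := by rw [hσdef]; linarith
    have hciσ : ∀ i, c i + δ ≤ σ := by
      intro i
      have h1 : c i ≤ ∑ j, c j := Finset.single_le_sum (fun j _ => hc j) (Finset.mem_univ i)
      rw [hσdef]; linarith
    set ind : Fin N → ℝ → ℝ :=
      fun j => (Icc (σ - (c j + δ)) (σ - c j)).indicator (fun _ => (1:ℝ)) with hinddef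
    have hind01 : ∀ j y, ind j y = 0 ∨ ind j y = 1 := by
      intro j y
      simp only [hinddef, Set.indicator_apply]
      by_cases hy : y ∈ Icc (σ - (c j + δ)) (σ - c j) <;> simp [hy]
    have hindabs : ∀ j y, |ind j y| ≤ 1 := by
      intro j y; rcases hind01 j y with h0 | h0 <;> simp [h0]
    have hindmeas : ∀ j, Measurable (ind j) := fun j =>
      measurable_const.indicator measurableSet_Icc
    set Box : Set (Fin N → ℝ) := Set.univ.pi (fun _ : Fin N => Icc (0:ℝ) σ) with hBoxdef
    have hBoxMeas : MeasurableSet Box := MeasurableSet.univ_pi (fun _ => measurableSet_Icc)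
    have hBoxCpt : IsCompact Box := isCompact_univ_pi (fun _ => isCompact_Icc)
    have hIntH : IntegrableOn h Box := hcont.continuousOn.integrableOn_compact hBoxCpt
    have hNN1 : (1:ℝ) ≤ (N:ℝ) ^ N := one_le_pow₀ (by exact_mod_cast hN)
    have key : ∀ G : (Fin N → ℝ) → ℝ, Measurable G → (∀ x, |G x| ≤ (N:ℝ)^N) →
        IntegrableOn (fun x => h x * G x) Box := by
      intro G hGm hGb
      have := hIntH.bdd_mul (hGm.aestronglyMeasurable)
        (Filter.Eventually.of_forall fun x => (by simpa using hGb x : ‖G x‖ ≤ (N:ℝ)^N))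
      simpa [mul_comm, IntegrableOn] using this
    -- each diagonal integral vanishes
    have hW : ∀ S : Finset (Fin N),
        (∫ x in Box, h x * ∏ i, (∑ j ∈ S, ind j (σ - x i))) = 0 := by
      intro S
      have hb : ∃ C, ∀ y, |∑ j ∈ S, ind j y| ≤ C := by
        refine ⟨N, fun y => ?_⟩
        calc |∑ j ∈ S, ind j y| ≤ ∑ j ∈ S, |ind j y| := Finset.abs_sum_le_sum_abs _ _
          _ ≤ ∑ _j ∈ S, 1 := Finset.sum_le_sum (fun j _ => hindabs j y)
          _ = (S.card : ℝ) := by simp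
          _ ≤ N := by exact_mod_cast (by simpa using Finset.card_le_univ S)
      have hd : ∀ p q : ℝ, {x ∈ Icc p q | ¬ ContinuousAt (fun y => ∑ j ∈ S, ind j y) x}.Finite := by
        intro p q
        have hsub : {x ∈ Icc p q | ¬ ContinuousAt (fun y => ∑ j ∈ S, ind j y) x}
            ⊆ ⋃ j : Fin N, ({σ - (c j + δ), σ - c j} : Set ℝ) := by
          intro x hx
          by_contra hmem
          simp only [Set.mem_iUnion, Set.mem_insert_iff, Set.mem_singleton_iff, not_exists,
            not_or] at hmem
          exact hx.2 (tendsto_finset_sum _ (fun j _ => indicatorContAt (hmem j).1 (hmem j).2))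
        exact Set.Finite.subset
          (Set.finite_iUnion (fun j => (Set.finite_singleton _).insert _)) hsub
      exact hvanish (fun y => ∑ j ∈ S, ind j y) hb hd σ hσpos
    -- permuted integrals all agree
    have permEq : ∀ f : Fin N → Fin N, Function.Bijective f →
        (∫ x in Box, h x * ∏ i, ind (f i) (σ - x i))
        = ∫ x in Box, h x * ∏ i, ind i (σ - x i) := by
      intro f hf
      set π := Equiv.ofBijective f hf with hπdef
      have hmp : MeasurePreserving (MeasurableEquiv.piCongrLeft (fun _ : Fin N => ℝ) π)
          volume volume := MeasureTheory.volume_measurePreserving_piCongrLeft _ π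
      have hemb := (MeasurableEquiv.piCongrLeft (fun _ : Fin N => ℝ) π).measurableEmbedding
      have hpre := hmp.setIntegral_preimage_emb hemb
        (fun y => h y * ∏ i, ind i (σ - y i)) Box
      have hex : ∀ x : Fin N → ℝ,
          (MeasurableEquiv.piCongrLeft (fun _ : Fin N => ℝ) π) x = x ∘ π.symm := by
        intro x
        ext j
        conv_lhs => rw [show j = π (π.symm j) from (π.apply_symm_apply j).symm]
        rw [MeasurableEquiv.piCongrLeft_apply_apply]
        rfl
      have hBoxpre : (MeasurableEquiv.piCongrLeft (fun _ : Fin N => ℝ) π) ⁻¹' Box = Box := by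
        ext x
        simp only [Set.mem_preimage, hBoxdef, Set.mem_univ_pi, hex]
        constructor
        · intro hx i
          have := hx (π i)
          simpa using this
        · intro hx j
          exact hx _
      rw [hBoxpre] at hpre
      rw [← hpre]
      refine integral_congr_ae (Filter.Eventually.of_forall fun x => ?_)
      show h x * ∏ i, ind (f i) (σ - x i)
          = h ((MeasurableEquiv.piCongrLeft (fun _ : Fin N => ℝ) π) x)
            * ∏ i, ind i (σ - (MeasurableEquiv.piCongrLeft (fun _ : Fin N => ℝ) π) x i)
      rw [hex x, hsym π.symm x]
      congr 1
      calc ∏ i, ind (f i) (σ - x i)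
          = ∏ i, ind (π i) (σ - (x ∘ π.symm) (π i)) := by
            refine Finset.prod_congr rfl fun i _ => ?_
            simp [Function.comp, Equiv.symm_apply_apply, hπdef]
        _ = ∏ i, ind i (σ - (x ∘ π.symm) i) := Equiv.prod_comp π (fun i => ind i (σ - (x ∘ π.symm) i))
    -- the identity-permutation integral vanishes
    have hIone : (∫ x in Box, h x * ∏ i, ind i (σ - x i)) = 0 := by
      have intS : ∀ S : Finset (Fin N), IntegrableOn
          (fun x => (-1:ℝ)^(N - S.card) * (h x * ∏ i, (∑ j ∈ S, ind j (σ - x i)))) Box := by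
        intro S
        apply Integrable.const_mul
        apply key
        · refine Finset.measurable_prod _ (fun i _ => ?_)
          exact Finset.measurable_sum _ (fun j _ =>
            (hindmeas j).comp (measurable_const.sub (measurable_pi_apply i)))
        · intro x
          rw [Finset.abs_prod]
          calc ∏ i, |∑ j ∈ S, ind j (σ - x i)| ≤ ∏ _i : Fin N, (N:ℝ) := by
                refine Finset.prod_le_prod (fun i _ => abs_nonneg _) (fun i _ => ?_)
                calc |∑ j ∈ S, ind j (σ - x i)| ≤ ∑ j ∈ S, |ind j (σ - x i)| :=
                      Finset.abs_sum_le_sum_abs _ _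
                  _ ≤ ∑ _j ∈ S, 1 := Finset.sum_le_sum (fun j _ => hindabs j _)
                  _ = (S.card : ℝ) := by simp
                  _ ≤ N := by exact_mod_cast (by simpa using Finset.card_le_univ S)
            _ = (N:ℝ)^N := by simp
      have intF : ∀ f : Fin N → Fin N, IntegrableOn
          (fun x => h x * ∏ i, ind (f i) (σ - x i)) Box := by
        intro f
        apply key
        · refine Finset.measurable_prod _ (fun i _ => ?_)
          exact (hindmeas (f i)).comp (measurable_const.sub (measurable_pi_apply i))
        · intro x
          rw [Finset.abs_prod]
          refine le_trans (Finset.prod_le_one (fun i _ => abs_nonneg _)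
            (fun i _ => hindabs _ _)) hNN1
      have hsum0 : (∫ x in Box, ∑ S : Finset (Fin N),
          (-1:ℝ)^(N - S.card) * (h x * ∏ i, (∑ j ∈ S, ind j (σ - x i)))) = 0 := by
        rw [MeasureTheory.integral_finset_sum _ (fun S _ => intS S)]
        refine Finset.sum_eq_zero fun S _ => ?_
        rw [MeasureTheory.integral_const_mul, hW S, mul_zero]
      have hpt : ∀ x : Fin N → ℝ, (∑ S : Finset (Fin N),
            (-1:ℝ)^(N - S.card) * (h x * ∏ i, (∑ j ∈ S, ind j (σ - x i))))
          = ∑ f ∈ Finset.univ.filter (fun f : Fin N → Fin N => Function.Bijective f),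
              h x * ∏ i, ind (f i) (σ - x i) := by
        intro x
        have hmp := myPolar (fun i j => ind j (σ - x i))
        calc (∑ S : Finset (Fin N),
              (-1:ℝ)^(N - S.card) * (h x * ∏ i, (∑ j ∈ S, ind j (σ - x i))))
            = h x * ∑ S : Finset (Fin N),
                (-1:ℝ)^(N - S.card) * ∏ i, (∑ j ∈ S, ind j (σ - x i)) := by
              rw [Finset.mul_sum]
              exact Finset.sum_congr rfl fun S _ => by ring
          _ = h x * ∑ f ∈ Finset.univ.filter (fun f : Fin N → Fin N => Function.Bijective f),
                ∏ i, ind (f i) (σ - x i) := by rw [hmp]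
          _ = _ := Finset.mul_sum _ _ _
      have hsum1 : (∫ x in Box, ∑ f ∈ Finset.univ.filter
            (fun f : Fin N → Fin N => Function.Bijective f),
            h x * ∏ i, ind (f i) (σ - x i)) = 0 := by
        rw [← hsum0]
        exact integral_congr_ae (Filter.Eventually.of_forall fun x => (hpt x).symm)
      rw [MeasureTheory.integral_finset_sum _ (fun f _ => intF f)] at hsum1
      have hconst : ∀ f ∈ Finset.univ.filter (fun f : Fin N → Fin N => Function.Bijective f),
          (∫ x in Box, h x * ∏ i, ind (f i) (σ - x i))
          = ∫ x in Box, h x * ∏ i, ind i (σ - x i) := by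
        intro f hf
        exact permEq f (Finset.mem_filter.mp hf).2
      rw [Finset.sum_congr rfl hconst, Finset.sum_const] at hsum1
      have hcard : 0 < (Finset.univ.filter
          (fun f : Fin N → Fin N => Function.Bijective f)).card := by
        exact Finset.card_pos.mpr ⟨id, Finset.mem_filter.mpr
          ⟨Finset.mem_univ id, Function.bijective_id⟩⟩
      rcases smul_eq_zero.mp hsum1 with hc | hv
      · exact absurd hc (by positivity)
      · exact hv
    -- rewrite the identity integral as the rectangle integral
    have hprodind : ∀ x : Fin N → ℝ, (∏ i, ind i (σ - x i))
        = Set.indicator (Set.univ.pi fun i => Icc (c i) (c i + δ)) (fun _ => (1:ℝ)) x := by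
      intro x
      by_cases hx : x ∈ Set.univ.pi fun i => Icc (c i) (c i + δ)
      · rw [Set.indicator_of_mem hx]
        refine Finset.prod_eq_one fun i _ => ?_
        simp only [hinddef]
        apply Set.indicator_of_mem
        have := hx i (Set.mem_univ i)
        exact ⟨by linarith [this.2], by linarith [this.1]⟩
      · rw [Set.indicator_of_notMem hx]
        rw [Set.mem_univ_pi] at hx
        push_neg at hx
        obtain ⟨i, hi⟩ := hx
        refine Finset.prod_eq_zero (Finset.mem_univ i) ?_
        simp only [hinddef]
        apply Set.indicator_of_notMem
        intro hmem
        exact hi ⟨by linarith [hmem.2], by linarith [hmem.1]⟩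
    have hRsub : (Set.univ.pi fun i => Icc (c i) (c i + δ)) ⊆ Box := by
      intro x hx i _
      have := hx i (Set.mem_univ i)
      exact ⟨le_trans (hc i) this.1, le_trans this.2 (hciσ i)⟩
    have hRmeas : MeasurableSet (Set.univ.pi fun i => Icc (c i) (c i + δ)) :=
      MeasurableSet.univ_pi fun _ => measurableSet_Icc
    calc ∫ x in Set.univ.pi (fun i => Icc (c i) (c i + δ)), h x
        = ∫ x in Box ∩ (Set.univ.pi fun i => Icc (c i) (c i + δ)), h x := by
          rw [Set.inter_eq_self_of_subset_right hRsub]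
      _ = ∫ x in Box, Set.indicator (Set.univ.pi fun i => Icc (c i) (c i + δ)) h x :=
          (setIntegral_indicator hRmeas).symm
      _ = ∫ x in Box, h x * ∏ i, ind i (σ - x i) := by
          refine integral_congr_ae (Filter.Eventually.of_forall fun x => ?_)
          show (Set.univ.pi fun i => Icc (c i) (c i + δ)).indicator h x
              = h x * ∏ i, ind i (σ - x i)
          rw [hprodind x]
          by_cases hx : x ∈ Set.univ.pi fun i => Icc (c i) (c i + δ)
          · rw [Set.indicator_of_mem hx, Set.indicator_of_mem hx, mul_one]
          · rw [Set.indicator_of_notMem hx, Set.indicator_of_notMem hx, mul_zero]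
      _ = 0 := hIone
  intro x₀ hx₀
  have h1 : h x₀ ≤ 0 := rectZero h hcont rect x₀ hx₀
  have h2 : (fun x => -h x) x₀ ≤ 0 := by
    refine rectZero (fun x => -h x) hcont.neg ?_ x₀ hx₀
    intro c δ hc hδ
    rw [integral_neg, rect c δ hc hδ, neg_zero]
  simp only at h2
  linarith
end
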